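/- arXiv:0904.1876 — 2 statements merged into one kernel-verified Lean document; each statement's English description precedes it below -/
import Mathlib

section
/- The group presented by ⟨T, U | U^2 = TU^2T, TUT = UTU⟩ is isomorphic to the group presented by ⟨S, T | S^3 = T^4 = (ST)^2⟩, via the substitution U = TS^{-1}. -/
/-- Relators for the binary octahedral group
`P₄₈ = ⟨T, U | U² = TU²T, TUT = UTU⟩`, with generator `0 = T`, `1 = U`. -/
def p48Rels : Set (FreeGroup (Fin 2)) :=
  {FreeGroup.of 1 ^ 2 *
     (FreeGroup.of 0 * FreeGroup.of 1 ^ 2 * FreeGroup.of 0)⁻¹,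
   FreeGroup.of 0 * FreeGroup.of 1 * FreeGroup.of 0 *
     (FreeGroup.of 1 * FreeGroup.of 0 * FreeGroup.of 1)⁻¹}

/-- Relators for `⟨S, T | S³ = T⁴ = (ST)²⟩`, with generator `0 = S`, `1 = T`. -/
def p48Rels' : Set (FreeGroup (Fin 2)) :=
  {FreeGroup.of 0 ^ 3 * (FreeGroup.of 1 ^ 4)⁻¹,
   FreeGroup.of 1 ^ 4 * ((FreeGroup.of 0 * FreeGroup.of 1) ^ 2)⁻¹}

namespace P48Aux

/-- Any relator becomes `1` in the presented group. -/
lemma mk_rel_one {α : Type*} {rels : Set (FreeGroup α)} {r : FreeGroup α} (hr : r ∈ rels) :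
    PresentedGroup.mk rels r = 1 :=
  (QuotientGroup.eq_one_iff _).mpr (Subgroup.subset_normalClosure hr)

lemma mk_of {α : Type*} (rels : Set (FreeGroup α)) (x : α) :
    PresentedGroup.mk rels (FreeGroup.of x) = PresentedGroup.of x := rfl


section Certificates
variable {H : Type*} [Group H]

lemma certV1 (S T : H) (h1 : S ^ 3 * (T ^ 4)⁻¹ = 1) (h2 : T ^ 4 * ((S * T) ^ 2)⁻¹ = 1) :
    (T * S⁻¹) ^ 2 * (T * (T * S⁻¹) ^ 2 * T)⁻¹ = 1 := by
  have key : (T * S⁻¹) ^ 2 * (T * (T * S⁻¹) ^ 2 * T)⁻¹ =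
      ((T * S⁻¹ * T * S⁻¹ * T⁻¹ * S * T⁻¹) * (S ^ 3 * (T ^ 4)⁻¹) * (T * S⁻¹ * T * S⁻¹ * T⁻¹ * S * T⁻¹)⁻¹) * ((T * S⁻¹ * T * S⁻¹ * T⁻¹ * S) * (T ^ 4 * ((S * T) ^ 2)⁻¹) * (T * S⁻¹ * T * S⁻¹ * T⁻¹ * S)⁻¹) * ((T * S⁻¹ * T * S⁻¹ * T⁻¹) * (S ^ 3 * (T ^ 4)⁻¹) * (T * S⁻¹ * T * S⁻¹ * T⁻¹)⁻¹) * ((T * S⁻¹ * T * S⁻¹) * (T ^ 4 * ((S * T) ^ 2)⁻¹) * (T * S⁻¹ * T * S⁻¹)⁻¹) * ((T * S⁻¹) * (T ^ 4 * ((S * T) ^ 2)⁻¹) * (T * S⁻¹)⁻¹) := by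
    simp only [pow_succ, pow_zero, one_mul]
    group
    all_goals (simp only [zpow_two]; group)
  rw [key, h1, h2]; group

lemma certV2 (S T : H) (h1 : S ^ 3 * (T ^ 4)⁻¹ = 1) (h2 : T ^ 4 * ((S * T) ^ 2)⁻¹ = 1) :
    T * (T * S⁻¹) * T * (T * S⁻¹ * T * (T * S⁻¹))⁻¹ = 1 := by
  have key : T * (T * S⁻¹) * T * (T * S⁻¹ * T * (T * S⁻¹))⁻¹ =
      ((T * T * S⁻¹) * (S ^ 3 * (T ^ 4)⁻¹)⁻¹ * (T * T * S⁻¹)⁻¹) * ((T * T * S * S * T⁻¹ * T⁻¹ * T⁻¹) * (T ^ 4 * ((S * T) ^ 2)⁻¹)⁻¹ * (T * T * S * S * T⁻¹ * T⁻¹ * T⁻¹)⁻¹) * ((T * T * S * T⁻¹ * T⁻¹ * T⁻¹) * (T ^ 4 * ((S * T) ^ 2)⁻¹)⁻¹ * (T * T * S * T⁻¹ * T⁻¹ * T⁻¹)⁻¹) := by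
    simp only [pow_succ, pow_zero, one_mul]
    group
    all_goals (simp only [zpow_two]; group)
  rw [key, h1, h2]; group

lemma certW1 (t u : H) (h1 : u ^ 2 * (t * u ^ 2 * t)⁻¹ = 1) (h2 : t * u * t * (u * t * u)⁻¹ = 1) :
    (u⁻¹ * t) ^ 3 * (t ^ 4)⁻¹ = 1 := by
  have key : (u⁻¹ * t) ^ 3 * (t ^ 4)⁻¹ =
      ((u⁻¹ * t * u⁻¹) * (t * u * t * (u * t * u)⁻¹) * (u⁻¹ * t * u⁻¹)⁻¹) * ((u⁻¹ * t * t * u * t⁻¹ * u⁻¹ * u⁻¹ * t⁻¹) * (u ^ 2 * (t * u ^ 2 * t)⁻¹) * (u⁻¹ * t * t * u * t⁻¹ * u⁻¹ * u⁻¹ * t⁻¹)⁻¹) * ((u⁻¹ * t * t * u⁻¹ * t⁻¹) * (u ^ 2 * (t * u ^ 2 * t)⁻¹) * (u⁻¹ * t * t * u⁻¹ * t⁻¹)⁻¹) * ((u⁻¹ * t) * (t * u * t * (u * t * u)⁻¹) * (u⁻¹ * t)⁻¹) * (u⁻¹ * (t * u * t * (u * t * u)⁻¹) * (u⁻¹)⁻¹)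 := by
    simp only [pow_succ, pow_zero, one_mul]
    group
    all_goals (simp only [zpow_two]; group)
  rw [key, h1, h2]; group

lemma certW2 (t u : H) (h1 : u ^ 2 * (t * u ^ 2 * t)⁻¹ = 1) (h2 : t * u * t * (u * t * u)⁻¹ = 1) :
    t ^ 4 * ((u⁻¹ * t * t) ^ 2)⁻¹ = 1 := by
  have key : t ^ 4 * ((u⁻¹ * t * t) ^ 2)⁻¹ =
      (t * (u ^ 2 * (t * u ^ 2 * t)⁻¹)⁻¹ * t⁻¹) * ((t * u * u * t⁻¹ * u⁻¹ * t⁻¹) * (t * u * t * (u * t * u)⁻¹)⁻¹ * (t * u * u * t⁻¹ * u⁻¹ * t⁻¹)⁻¹) * ((t * u * t⁻¹ * u⁻¹ * t⁻¹) * (t * u * t * (u * t * u)⁻¹)⁻¹ * (t * u * t⁻¹ * u⁻¹ * t⁻¹)⁻¹) := by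
    simp only [pow_succ, pow_zero, one_mul]
    group
    all_goals (simp only [zpow_two] <;> group)
  rw [key, h1, h2]; group

end Certificates

/-- `S³ (T⁴)⁻¹ = 1` in the second presented group. -/
lemma hS1 : (PresentedGroup.of 0 : PresentedGroup p48Rels') ^ 3 *
    ((PresentedGroup.of 1 : PresentedGroup p48Rels') ^ 4)⁻¹ = 1 := by
  have h := mk_rel_one (rels := p48Rels')
    (r := FreeGroup.of 0 ^ 3 * (FreeGroup.of 1 ^ 4)⁻¹) (Set.mem_insert _ _)
  simpa only [map_mul, map_inv, map_pow, mk_of] using h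

lemma hS2 : (PresentedGroup.of 1 : PresentedGroup p48Rels') ^ 4 *
    (((PresentedGroup.of 0 : PresentedGroup p48Rels') * PresentedGroup.of 1) ^ 2)⁻¹ = 1 := by
  have h := mk_rel_one (rels := p48Rels')
    (r := FreeGroup.of 1 ^ 4 * ((FreeGroup.of 0 * FreeGroup.of 1) ^ 2)⁻¹)
    (Set.mem_insert_of_mem _ rfl)
  simpa only [map_mul, map_inv, map_pow, mk_of] using h

/-- `U² (TU²T)⁻¹ = 1` in the first presented group. -/
lemma hR1 : (PresentedGroup.of 1 : PresentedGroup p48Rels) ^ 2 *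
    ((PresentedGroup.of 0 : PresentedGroup p48Rels) * PresentedGroup.of 1 ^ 2 *
      PresentedGroup.of 0)⁻¹ = 1 := by
  have h := mk_rel_one (rels := p48Rels)
    (r := FreeGroup.of 1 ^ 2 * (FreeGroup.of 0 * FreeGroup.of 1 ^ 2 * FreeGroup.of 0)⁻¹)
    (Set.mem_insert _ _)
  simpa only [map_mul, map_inv, map_pow, mk_of] using h

lemma hR2 : (PresentedGroup.of 0 : PresentedGroup p48Rels) * PresentedGroup.of 1 *
    PresentedGroup.of 0 *
    ((PresentedGroup.of 1 : PresentedGroup p48Rels) * PresentedGroup.of 0 *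
      PresentedGroup.of 1)⁻¹ = 1 := by
  have h := mk_rel_one (rels := p48Rels)
    (r := FreeGroup.of 0 * FreeGroup.of 1 * FreeGroup.of 0 *
      (FreeGroup.of 1 * FreeGroup.of 0 * FreeGroup.of 1)⁻¹)
    (Set.mem_insert_of_mem _ rfl)
  simpa only [map_mul, map_inv, map_pow, mk_of] using h

/-- The map sending `T ↦ T`, `U ↦ T S⁻¹`. -/
def fTU : Fin 2 → PresentedGroup p48Rels' :=
  ![PresentedGroup.of 1, PresentedGroup.of 1 * (PresentedGroup.of 0)⁻¹]

/-- The map sending `S ↦ U⁻¹ T`, `T ↦ T`. -/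
def gST : Fin 2 → PresentedGroup p48Rels :=
  ![(PresentedGroup.of 1)⁻¹ * PresentedGroup.of 0, PresentedGroup.of 0]

lemma hf : ∀ r ∈ p48Rels, FreeGroup.lift fTU r = 1 := by
  intro r hr
  rcases hr with rfl | rfl <;>
    simp only [map_mul, map_inv, map_pow, FreeGroup.lift_apply_of, fTU,
      Matrix.cons_val_zero, Matrix.cons_val_one, Matrix.head_cons]
  · exact certV1 _ _ hS1 hS2
  · exact certV2 _ _ hS1 hS2

lemma hg : ∀ r ∈ p48Rels', FreeGroup.lift gST r = 1 := by
  intro r hr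
  rcases hr with rfl | rfl <;>
    simp only [map_mul, map_inv, map_pow, FreeGroup.lift_apply_of, gST,
      Matrix.cons_val_zero, Matrix.cons_val_one, Matrix.head_cons]
  · exact certW1 _ _ hR1 hR2
  · exact certW2 _ _ hR1 hR2

end P48Aux

/-- `⟨T, U | U² = TU²T, TUT = UTU⟩ ≅ ⟨S, T | S³ = T⁴ = (ST)²⟩` via `T = T`, `U = TS⁻¹`. -/
theorem p48_presentations_isomorphic :
    ∃ e : PresentedGroup p48Rels ≃* PresentedGroup p48Rels',
      e (PresentedGroup.of 0) = (PresentedGroup.of 1 : PresentedGroup p48Rels') ∧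
      e (PresentedGroup.of 1) =
        (PresentedGroup.of 1 : PresentedGroup p48Rels') * (PresentedGroup.of 0)⁻¹ := by
  classical
  let φ : PresentedGroup p48Rels →* PresentedGroup p48Rels' := PresentedGroup.toGroup P48Aux.hf
  let ψ : PresentedGroup p48Rels' →* PresentedGroup p48Rels := PresentedGroup.toGroup P48Aux.hg
  have hgf : ψ.comp φ = MonoidHom.id _ := by
    apply PresentedGroup.ext
    intro x
    fin_cases x <;>
      simp [φ, ψ, P48Aux.fTU, P48Aux.gST, map_mul, map_inv, MonoidHom.comp_apply]
  have hfg : φ.comp ψ = MonoidHom.id _ := by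
    apply PresentedGroup.ext
    intro x
    fin_cases x <;>
      simp [φ, ψ, P48Aux.fTU, P48Aux.gST, map_mul, map_inv, MonoidHom.comp_apply]
  refine ⟨MonoidHom.toMulEquiv φ ψ hgf hfg, ?_, ?_⟩ <;>
    simp [MonoidHom.toMulEquiv, φ, P48Aux.fTU]
end

section
/- The abelianization of P'_{8·3^k} = ⟨x, y, z | x^2 = (xy)^2 = y^2, zxz^{-1} = y, zyz^{-1} = xy, z^{3^k} = 1⟩ is isomorphic to Z/3^k. -/
/-- Relators for `P'_{8·3ᵏ} = ⟨x, y, z | x² = (xy)² = y², zxz⁻¹ = y, zyz⁻¹ = xy,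
z^(3ᵏ) = 1⟩`, with generators `0 = x`, `1 = y`, `2 = z`. -/
def pPrimeRels (k : ℕ) : Set (FreeGroup (Fin 3)) :=
  {FreeGroup.of 0 ^ 2 * ((FreeGroup.of 0 * FreeGroup.of 1) ^ 2)⁻¹,
   (FreeGroup.of 0 * FreeGroup.of 1) ^ 2 * (FreeGroup.of 1 ^ 2)⁻¹,
   FreeGroup.of 2 * FreeGroup.of 0 * (FreeGroup.of 2)⁻¹ * (FreeGroup.of 1)⁻¹,
   FreeGroup.of 2 * FreeGroup.of 1 * (FreeGroup.of 2)⁻¹ *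
     (FreeGroup.of 0 * FreeGroup.of 1)⁻¹,
   FreeGroup.of 2 ^ (3 ^ k)}

/-- The group `P'_{8·3ᵏ}`. -/
abbrev PPrime (k : ℕ) := PresentedGroup (pPrimeRels k)

namespace PPrimeAux

variable (k : ℕ)

/-- relators are trivial in the presented group -/
lemma mk_rel_one {r : FreeGroup (Fin 3)} (hr : r ∈ pPrimeRels k) :
    (QuotientGroup.mk r : PPrime k) = 1 := by
  rw [QuotientGroup.eq_one_iff]
  exact Subgroup.subset_normalClosure hr

lemma of_eq_mk (i : Fin 3) :
    (PresentedGroup.of i : PPrime k) = QuotientGroup.mk (FreeGroup.of i) := rfl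

lemma z_pow : (PresentedGroup.of 2 : PPrime k) ^ (3 ^ k) = 1 := by
  have := mk_rel_one k (r := FreeGroup.of 2 ^ (3 ^ k)) (by simp [pPrimeRels])
  rwa [QuotientGroup.mk_pow] at this

local notation "X" => Abelianization.of (PresentedGroup.of (rels := pPrimeRels k) 0)
local notation "Y" => Abelianization.of (PresentedGroup.of (rels := pPrimeRels k) 1)
local notation "Z" => Abelianization.of (PresentedGroup.of (rels := pPrimeRels k) 2)

lemma rel3 : Z * X * Z⁻¹ * Y⁻¹ = 1 := by
  have := mk_rel_one k (r := FreeGroup.of 2 * FreeGroup.of 0 * (FreeGroup.of 2)⁻¹ *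
    (FreeGroup.of 1)⁻¹) (by simp [pPrimeRels])
  have : (Abelianization.of (QuotientGroup.mk (FreeGroup.of 2 * FreeGroup.of 0 *
      (FreeGroup.of 2)⁻¹ * (FreeGroup.of 1)⁻¹ : FreeGroup (Fin 3)) : PPrime k)) = 1 := by
    rw [this]; exact map_one _
  simp [of_eq_mk] at this ⊢
  exact this

lemma rel4 : Z * Y * Z⁻¹ * (X * Y)⁻¹ = 1 := by
  have := mk_rel_one k (r := FreeGroup.of 2 * FreeGroup.of 1 * (FreeGroup.of 2)⁻¹ *
    (FreeGroup.of 0 * FreeGroup.of 1)⁻¹) (by simp [pPrimeRels])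
  have : (Abelianization.of (QuotientGroup.mk (FreeGroup.of 2 * FreeGroup.of 1 *
      (FreeGroup.of 2)⁻¹ * (FreeGroup.of 0 * FreeGroup.of 1)⁻¹ : FreeGroup (Fin 3)) :
      PPrime k)) = 1 := by
    rw [this]; exact map_one _
  simp [of_eq_mk] at this ⊢
  exact this

lemma X_eq_one : X = 1 := by
  have h4 : Z * Y * Z⁻¹ = X * Y := mul_inv_eq_one.mp (rel4 k)
  have h2 : Z * Y * Z⁻¹ = Y := by
    rw [mul_comm Z Y, mul_assoc, mul_inv_cancel, mul_one]
  exact right_eq_mul.mp (h2.symm.trans h4)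

lemma Y_eq_one : Y = 1 := by
  have h3 : Z * X * Z⁻¹ = Y := mul_inv_eq_one.mp (rel3 k)
  have h2 : Z * X * Z⁻¹ = X := by
    rw [mul_comm Z X, mul_assoc, mul_inv_cancel, mul_one]
  rw [← h3, h2, X_eq_one]

end PPrimeAux

theorem abelianization_pPrime (k : ℕ) (hk : 1 ≤ k) :
    Nonempty (Abelianization (PPrime k) ≃* Multiplicative (ZMod (3 ^ k))) := by
  classical
  set n := 3 ^ k with hn
  haveI : NeZero n := ⟨pow_ne_zero k (by norm_num)⟩
  -- the forward hom
  have hrel : ∀ r ∈ pPrimeRels k,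
      FreeGroup.lift (fun i : Fin 3 => if i = 2 then
        (Multiplicative.ofAdd (1 : ZMod n)) else 1) r = 1 := by
    intro r hr
    rcases hr with h | h | h | h | h <;> subst h <;>
      simp [FreeGroup.lift_apply_of]
    · rw [← ofAdd_nsmul]
      simp [hn, ZMod.natCast_self]
  let φ : PPrime k →* Multiplicative (ZMod n) := PresentedGroup.toGroup hrel
  let φ' : Abelianization (PPrime k) →* Multiplicative (ZMod n) := Abelianization.lift φ
  -- the backward hom
  let g : Additive (Abelianization (PPrime k)) :=
    Additive.ofMul (Abelianization.of (PresentedGroup.of 2))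
  have hg : (zmultiplesHom _ g) (n : ℤ) = 0 := by
    show (n : ℤ) • g = 0
    have := PPrimeAux.z_pow k
    have : (Abelianization.of (PresentedGroup.of (rels := pPrimeRels k) 2)) ^ (n : ℤ) = 1 := by
      rw [zpow_natCast, ← map_pow, this, map_one]
    simpa [g] using congrArg Additive.ofMul this
  let ψ₀ : ZMod n →+ Additive (Abelianization (PPrime k)) :=
    ZMod.lift n ⟨zmultiplesHom _ g, hg⟩
  let ψ : Multiplicative (ZMod n) →* Abelianization (PPrime k) :=
    AddMonoidHom.toMultiplicativeLeft ψ₀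
  have hψ1 : ψ (Multiplicative.ofAdd (1 : ZMod n)) =
      Abelianization.of (PresentedGroup.of 2) := by
    show Additive.toMul (ψ₀ (1 : ZMod n)) = _
    have : ((1 : ℤ) : ZMod n) = 1 := by push_cast; ring
    rw [← this, ZMod.lift_coe]
    simp [g]
  have key : ψ.comp φ' = MonoidHom.id _ := by
    apply Abelianization.hom_ext
    apply MonoidHom.ext
    intro p
    show ψ (φ' (Abelianization.of p)) = Abelianization.of p
    have : (Abelianization.of (G := PPrime k)).comp
        (MonoidHom.id _) = Abelianization.of := rfl
    revert p
    suffices h : (ψ.comp φ').comp (Abelianization.of (G := PPrime k)) =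
        Abelianization.of (G := PPrime k) by
      intro p; exact DFunLike.congr_fun h p
    apply PresentedGroup.ext
    intro i
    fin_cases i <;>
      simp only [MonoidHom.comp_apply]
    · show ψ (φ' (Abelianization.of (PresentedGroup.of (0 : Fin 3)))) =
        Abelianization.of (PresentedGroup.of (0 : Fin 3))
      rw [PPrimeAux.X_eq_one k]
      simp
    · show ψ (φ' (Abelianization.of (PresentedGroup.of (1 : Fin 3)))) =
        Abelianization.of (PresentedGroup.of (1 : Fin 3))
      rw [PPrimeAux.Y_eq_one k]
      simp
    · show ψ (φ' (Abelianization.of (PresentedGroup.of (2 : Fin 3)))) =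
        Abelianization.of (PresentedGroup.of (2 : Fin 3))
      rw [show φ' (Abelianization.of (PresentedGroup.of 2)) = φ (PresentedGroup.of 2) from rfl]
      rw [show φ (PresentedGroup.of (2 : Fin 3)) = Multiplicative.ofAdd (1 : ZMod n) from by
        simp [φ, PresentedGroup.toGroup.of]]
      exact hψ1
  have key2 : φ'.comp ψ = MonoidHom.id _ := by
    apply MonoidHom.ext
    intro m
    obtain ⟨j, hj⟩ := ZMod.intCast_surjective (n := n) (Multiplicative.toAdd m)
    have hm : m = Multiplicative.ofAdd ((j : ZMod n)) := by
      rw [hj]; rfl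
    subst hm
    show φ' (ψ (Multiplicative.ofAdd ((j : ZMod n)))) = _
    have : ψ (Multiplicative.ofAdd ((j : ZMod n))) =
        (Abelianization.of (PresentedGroup.of (rels := pPrimeRels k) 2)) ^ j := by
      show Additive.toMul (ψ₀ ((j : ZMod n))) = _
      rw [ZMod.lift_coe]
      show Additive.toMul ((j : ℤ) • g) = _
      simp [g, toMul_zsmul]
    rw [this, map_zpow]
    rw [show φ' (Abelianization.of (PresentedGroup.of 2)) = φ (PresentedGroup.of 2) from rfl]
    rw [show φ (PresentedGroup.of (2 : Fin 3)) = Multiplicative.ofAdd (1 : ZMod n) from by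
      simp [φ, PresentedGroup.toGroup.of]]
    show Multiplicative.ofAdd (1 : ZMod n) ^ j = Multiplicative.ofAdd ((j : ZMod n))
    rw [← ofAdd_zsmul]
    congr 1
    simp
  exact ⟨MulEquiv.mk' ⟨φ', ψ, fun a => DFunLike.congr_fun key a,
    fun m => DFunLike.congr_fun key2 m⟩ φ'.map_mul⟩
end
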